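/- Let A be an n×n complex matrix, and let 𝒳̂, 𝒴̂ ⊆ ℂⁿ be subspaces with 𝒴̂^⊥ ⊕ 𝒳̂ = ℂⁿ, 𝒴̂^⊥ ⊆ im(Aᴴ), and A·𝒴̂^⊥ ∩ 𝒳̂ = {0}. Then the matrix N := P_{𝒳̂,𝒴̂^⊥} + A P_{𝒴̂^⊥,𝒳̂} is invertible, where P_{R,S} denotes the oblique projector onto R along S. -/

import Mathlib

open Matrix

private lemma toEucl_one {n : ℕ} :
    Matrix.toEuclideanLin (1 : Matrix (Fin n) (Fin n) ℂ) = LinearMap.id := by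
  apply LinearMap.ext; intro x
  simp [Matrix.toEuclideanLin_apply, Matrix.one_mulVec]

private lemma toEucl_mul {n : ℕ} (M M' : Matrix (Fin n) (Fin n) ℂ)
    (x : EuclideanSpace ℂ (Fin n)) :
    Matrix.toEuclideanLin (M * M') x =
      Matrix.toEuclideanLin M (Matrix.toEuclideanLin M' x) := by
  simp [Matrix.toEuclideanLin_apply, Matrix.mulVec_mulVec]

/-- If `𝒴̂ᗮ ⊕ 𝒳̂ = ℂⁿ`, `𝒴̂ᗮ ⊆ im Aᴴ`, and `A·𝒴̂ᗮ ∩ 𝒳̂ = {0}`,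
then `N = P_{𝒳̂,𝒴̂ᗮ} + A P_{𝒴̂ᗮ,𝒳̂}` is invertible. -/
theorem stmt15 {n : ℕ}
    (A : Matrix (Fin n) (Fin n) ℂ)
    (Xh Yh : Submodule ℂ (EuclideanSpace ℂ (Fin n)))
    (hcompl : Disjoint (Yhᗮ) Xh ∧ Yhᗮ ⊔ Xh = ⊤)
    (hYA : Yhᗮ ≤ LinearMap.range (Matrix.toEuclideanLin Aᴴ))
    (hAYX : Submodule.map (Matrix.toEuclideanLin A) (Yhᗮ) ⊓ Xh = ⊥)
    (P : Matrix (Fin n) (Fin n) ℂ)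
    (hP : P * P = P ∧ LinearMap.range (Matrix.toEuclideanLin P) = Yhᗮ ∧
      LinearMap.ker (Matrix.toEuclideanLin P) = Xh)
    (N : Matrix (Fin n) (Fin n) ℂ) (hN : N = (1 - P) + A * P) :
    IsUnit N.det := by
  obtain ⟨hPP, hrange, hker⟩ := hP
  set fP := Matrix.toEuclideanLin P with hfP
  set fA := Matrix.toEuclideanLin A with hfA
  -- key injectivity
  have key : ∀ x : EuclideanSpace ℂ (Fin n), Matrix.toEuclideanLin N x = 0 → x = 0 := by
    intro x hx
    have hNx : (x - fP x) + fA (fP x) = 0 := by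
      rw [hN, map_add, map_sub, toEucl_one] at hx
      simpa [toEucl_mul] using hx
    have h1 : x - fP x ∈ Xh := by
      rw [← hker]
      have : fP (x - fP x) = 0 := by
        have h2 : fP (fP x) = fP x := by
          have := toEucl_mul P P x
          rw [hPP] at this
          simpa using this.symm
        simp [map_sub, h2]
      exact this
    have h2 : fA (fP x) ∈ Submodule.map fA (Yhᗮ) :=
      ⟨fP x, hrange ▸ LinearMap.mem_range_self fP x, rfl⟩
    have h3 : x - fP x = 0 ∧ fA (fP x) = 0 := by
      have hmem : x - fP x ∈ Submodule.map fA (Yhᗮ) ⊓ Xh := by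
        constructor
        · rw [eq_neg_of_add_eq_zero_left hNx]
          exact neg_mem h2
        · exact h1
      rw [hAYX] at hmem
      have hz : x - fP x = 0 := hmem
      rw [hz, zero_add] at hNx
      exact ⟨hz, hNx⟩
    obtain ⟨hz1, hz2⟩ := h3
    have hxP : x = fP x := by rwa [sub_eq_zero] at hz1
    have hAx : fA x = 0 := by rw [hxP]; exact hz2
    -- x ∈ Yhᗮ ≤ range Aᴴ = range (adjoint fA), and fA x = 0 ⇒ x = 0
    have hxY : x ∈ Yhᗮ := by
      rw [← hrange, hxP]
      exact LinearMap.mem_range_self fP x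
    obtain ⟨y, hy⟩ := hYA hxY
    rw [Matrix.toEuclideanLin_conjTranspose_eq_adjoint] at hy
    have : (inner ℂ x x : ℂ) = 0 := by
      rw [← hy, LinearMap.adjoint_inner_left, hy]
      show (inner ℂ y (fA x) : ℂ) = 0
      rw [hAx, inner_zero_right]
    exact inner_self_eq_zero.mp this
  -- conclude det is a unit
  rw [isUnit_iff_ne_zero]
  intro hdet
  obtain ⟨v, hv, hv0⟩ := (Matrix.exists_mulVec_eq_zero_iff).mpr hdet
  apply hv
  have : Matrix.toEuclideanLin N ((WithLp.equiv 2 _).symm v) = 0 := by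
    rw [Matrix.toEuclideanLin_apply]
    simp [hv0]
  have := key _ this
  simpa using congrArg (WithLp.equiv 2 (Fin n → ℂ)) this
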